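/- Let p be a prime, e ∈ ℕ, and let e_1,…,e_s ∈ ℕ be such that e_i < e for all i ∈ {1,…,s'} and e_i = e for all i ∈ {s'+1,…,s}, for some 0 ≤ s' ≤ s−1. Then ∑_{J ⊆ {1,…,s}, max_{i∈J} e_i = e} ∏_{i∈J} (−p^{e_i}) = (∏_{i=1}^{s'} (1 − p^{e_i})) · ((1 − p^e)^{s−s'} − 1), where the sum runs over nonempty subsets J containing at least one index from {s'+1,…,s}. In particular this quantity is nonzero, except when p^e = 2 and s − s' = s is even. -/

import Mathlib

open Matrix Polynomial

/-- The Coxeter matrix `Φ_[n]` of the linearly oriented quiver of type `A_{n-1}`: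
the `(n-1) × (n-1)` integer matrix whose `(i,j)`-entry is `1` if `j = i + 1`
(for rows other than the last), whose last row has all entries `-1`, and whose
other entries are `0`. -/
def PhiA (n : ℕ) : Matrix (Fin (n - 1)) (Fin (n - 1)) ℤ :=
  fun i j =>
    if (i : ℕ) = n - 2 then -1
    else if (j : ℕ) = (i : ℕ) + 1 then 1 else 0

/-- The Kronecker (tensor) product `Φ_{[n_1,…,n_s]} = Φ_{[n_1]} ⊗ ⋯ ⊗ Φ_{[n_s]}`,
realized on the index type `Π i, Fin (n i - 1)`. -/
def PhiProd {s : ℕ} (n : Fin s → ℕ) :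
    Matrix ((i : Fin s) → Fin (n i - 1)) ((i : Fin s) → Fin (n i - 1)) ℤ :=
  fun x y => ∏ i, PhiA (n i) (x i) (y i)

/-- The characteristic polynomial `χ_{[n_1,…,n_s]} ∈ ℤ[X]` of `Φ_{[n_1,…,n_s]}`. -/
noncomputable def Chi {s : ℕ} (n : Fin s → ℕ) : Polynomial ℤ :=
  (PhiProd n).charpoly

/-- The standard primitive complex `m`-th root of unity `exp(2π√-1/m)`. -/
noncomputable def zeta (m : ℕ) : ℂ := Complex.exp (2 * Real.pi * Complex.I / m)
lemma aux_pow_eq_one {x : ℤ} {k : ℕ} (hx : x ≤ -1) (hk : k ≠ 0) :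
    x ^ k = 1 ↔ x = -1 ∧ Even k := by
  constructor
  · intro h
    have hnat : x.natAbs ^ k = 1 := by
      have := congrArg Int.natAbs h
      simpa [Int.natAbs_pow] using this
    have h1 : x.natAbs = 1 := (pow_eq_one_iff_of_nonneg (Nat.zero_le _) hk).mp hnat
    have hx1 : x = -1 := by omega
    subst hx1
    refine ⟨rfl, ?_⟩
    simpa using (neg_one_pow_eq_one_iff_even (by norm_num : (-1 : ℤ) ≠ 1)).mp h
  · rintro ⟨rfl, hk2⟩
    exact hk2.neg_one_pow

theorem prime_power_sum_identity (p : ℕ) (hp : p.Prime) (e : ℕ) (he : 0 < e)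
    {s : ℕ} (s' : ℕ) (hs' : s' < s)
    (E : Fin s → ℕ) (hE : ∀ i, 0 < E i)
    (hlt : ∀ i : Fin s, (i : ℕ) < s' → E i < e)
    (heq : ∀ i : Fin s, s' ≤ (i : ℕ) → E i = e) :
    (∑ J ∈ Finset.univ.filter (fun J : Finset (Fin s) => ∃ i ∈ J, s' ≤ (i : ℕ)),
        ∏ i ∈ J, (-(p : ℤ) ^ (E i)))
      = (∏ i ∈ Finset.univ.filter (fun i : Fin s => (i : ℕ) < s'),
          (1 - (p : ℤ) ^ (E i)))
        * ((1 - (p : ℤ) ^ e) ^ (s - s') - 1) ∧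
    ((∑ J ∈ Finset.univ.filter (fun J : Finset (Fin s) => ∃ i ∈ J, s' ≤ (i : ℕ)),
        ∏ i ∈ J, (-(p : ℤ) ^ (E i))) ≠ 0
      ↔ ¬ (p ^ e = 2 ∧ s' = 0 ∧ Even s)) := by
  classical
  have hp2 : (2 : ℤ) ≤ (p : ℤ) := by exact_mod_cast hp.two_le
  set S : Finset (Fin s) := Finset.univ.filter (fun i : Fin s => (i : ℕ) < s') with hSdef
  set A : ℤ := ∏ i ∈ S, (1 - (p : ℤ) ^ (E i)) with hAdef
  -- card of S and Sᶜ
  have hcardS : S.card = s' := by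
    have : S = Finset.Iio (⟨s', hs'⟩ : Fin s) := by
      ext i; simp [hSdef, Fin.lt_def]
    rw [this, Fin.card_Iio]
  have hcardSc : Sᶜ.card = s - s' := by
    rw [Finset.card_compl, hcardS, Fintype.card_fin]
  -- the total sum over all subsets
  have hsum_all : ∑ J : Finset (Fin s), ∏ i ∈ J, (-(p : ℤ) ^ (E i))
      = ∏ i : Fin s, (1 - (p : ℤ) ^ (E i)) := by
    have := Finset.prod_add (fun i : Fin s => -(p : ℤ) ^ (E i))
      (fun _ => (1 : ℤ)) Finset.univ
    simpa [Finset.powerset_univ, sub_eq_neg_add] using this.symm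
  -- the sum over subsets of S
  have hfilter_not : Finset.univ.filter
      (fun J : Finset (Fin s) => ¬ ∃ i ∈ J, s' ≤ (i : ℕ)) = S.powerset := by
    ext J
    simp only [Finset.mem_filter, Finset.mem_univ, true_and, Finset.mem_powerset]
    rw [Finset.subset_iff]
    push_neg
    constructor
    · intro h i hi
      simp only [hSdef, Finset.mem_filter, Finset.mem_univ, true_and]
      exact h i hi
    · intro h i hi
      have := h hi
      simp only [hSdef, Finset.mem_filter, Finset.mem_univ, true_and] at this
      omega
  have hsum_not : ∑ J ∈ Finset.univ.filter
      (fun J : Finset (Fin s) => ¬ ∃ i ∈ J, s' ≤ (i : ℕ)),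
      ∏ i ∈ J, (-(p : ℤ) ^ (E i)) = A := by
    rw [hfilter_not, hAdef]
    have := Finset.prod_add (fun i : Fin s => -(p : ℤ) ^ (E i))
      (fun _ => (1 : ℤ)) S
    simpa [sub_eq_neg_add] using this.symm
  -- the product over Sᶜ
  have hprod_compl : ∏ i ∈ Sᶜ, (1 - (p : ℤ) ^ (E i)) = (1 - (p : ℤ) ^ e) ^ (s - s') := by
    rw [← hcardSc, ← Finset.prod_const]
    refine Finset.prod_congr rfl fun i hi => ?_
    have : s' ≤ (i : ℕ) := by
      simp only [hSdef, Finset.mem_compl, Finset.mem_filter, Finset.mem_univ, true_and,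
        not_lt] at hi
      exact hi
    rw [heq i this]
  have hsplit : ∏ i : Fin s, (1 - (p : ℤ) ^ (E i)) = A * (1 - (p : ℤ) ^ e) ^ (s - s') := by
    rw [← Finset.prod_mul_prod_compl S, hprod_compl]
  -- main identity
  have hmain : (∑ J ∈ Finset.univ.filter (fun J : Finset (Fin s) => ∃ i ∈ J, s' ≤ (i : ℕ)),
      ∏ i ∈ J, (-(p : ℤ) ^ (E i))) = A * ((1 - (p : ℤ) ^ e) ^ (s - s') - 1) := by
    have h0 := Finset.sum_filter_add_sum_filter_not Finset.univ
      (fun J : Finset (Fin s) => ∃ i ∈ J, s' ≤ (i : ℕ))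
      (fun J => ∏ i ∈ J, (-(p : ℤ) ^ (E i)))
    rw [hsum_not, hsum_all, hsplit] at h0
    linarith [h0]
  refine ⟨hmain, ?_⟩
  rw [hmain]
  -- A ≠ 0
  have hApos : A ≠ 0 := by
    rw [hAdef]
    refine Finset.prod_ne_zero_iff.mpr fun i _ => ?_
    have h2 : (2 : ℤ) ≤ (p : ℤ) ^ (E i) :=
      le_trans hp2 (le_self_pow₀ (by linarith) (hE i).ne')
    omega
  have hpe2 : (2 : ℤ) ≤ (p : ℤ) ^ e :=
    le_trans hp2 (le_self_pow₀ (by linarith) he.ne')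
  have hk : s - s' ≠ 0 := by omega
  constructor
  · intro hne h2
    obtain ⟨hpe, hs0, hevs⟩ := h2
    apply hne
    have : (1 - (p : ℤ) ^ e) = -1 := by
      have : ((p : ℤ)) ^ e = 2 := by exact_mod_cast congrArg (Nat.cast : ℕ → ℤ) hpe
      omega
    rw [this]
    have : Even (s - s') := by rw [hs0]; simpa using hevs
    rw [this.neg_one_pow]
    ring
  · intro hnot
    refine mul_ne_zero hApos ?_
    intro hzero
    have h1 : (1 - (p : ℤ) ^ e) ^ (s - s') = 1 := by linarith
    have := (aux_pow_eq_one (by omega : (1 - (p : ℤ) ^ e) ≤ -1) hk).mp h1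
    obtain ⟨hbase, heven⟩ := this
    have hpe : p ^ e = 2 := by
      have : ((p : ℤ)) ^ e = 2 := by omega
      exact_mod_cast this
    -- p^e = 2 forces s' = 0
    have hs0 : s' = 0 := by
      by_contra h0
      have hpos : 0 < s' := Nat.pos_of_ne_zero h0
      have hi : (0 : ℕ) < s := by omega
      have := hlt ⟨0, hi⟩ (by simpa using hpos)
      have hple : 2 ≤ p := hp.two_le
      have he1 : e = 1 := by
        by_contra hne1
        have h2e : 2 ≤ e := by omega
        have h4 : 2 ^ 2 ≤ p ^ e :=
          (Nat.pow_le_pow_left hple 2).trans (Nat.pow_le_pow_right (by omega) h2e)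
        omega
      have := hE ⟨0, hi⟩
      omega
    exact hnot ⟨hpe, hs0, by simpa [hs0] using heven⟩
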